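/- Let (H, K) be a Radford pair of Hopf algebras, i.e., there exist Hopf algebra morphisms i: H → K and p: K → H with p ∘ i = id_H. Then the subspace of right coinvariants R = K^{coH} = {k ∈ K : (id ⊗ p)Δ(k) = k ⊗ 1} is a subalgebra of K, and the map R ⊗ H → K, r ⊗ h ↦ r·i(h), is an isomorphism (of H-Hopf modules), giving K ≅ R # H. -/

import Mathlib

open TensorProduct

open Coalgebra LinearMap

namespace RadfordAux

variable {K : Type*} [CommSemiring K]

section Conv

variable {C : Type*} [AddCommMonoid C] [Module K C] [Coalgebra K C]
variable {B : Type*} [Semiring B] [Algebra K B]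

/-- Convolution product of linear maps from a coalgebra to an algebra. -/
noncomputable def conv (f g : C →ₗ[K] B) : C →ₗ[K] B :=
  LinearMap.mul' K B ∘ₗ TensorProduct.map f g ∘ₗ Coalgebra.comul

/-- Unit of the convolution algebra. -/
noncomputable def cu : C →ₗ[K] B := Algebra.linearMap K B ∘ₗ Coalgebra.counit

lemma conv_repr (f g : C →ₗ[K] B) {a : C} {ι : Type*} (r : Coalgebra.Repr K a ι) :
    conv f g a = ∑ i ∈ r.index, f (r.left i) * g (r.right i) := by
  simp only [conv, comp_apply, ← r.eq, map_sum, TensorProduct.map_tmul, mul'_apply]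

lemma cu_apply (a : C) : (cu : C →ₗ[K] B) a = algebraMap K B (Coalgebra.counit a) := rfl

lemma conv_cu_left (f : C →ₗ[K] B) : conv cu f = f := by
  ext a
  have h := Coalgebra.sum_counit_tmul_map_eq (R := K) f a (repr := ℛ K a)
  apply_fun (TensorProduct.lid K B) at h
  simp only [map_sum, lid_tmul, one_smul] at h
  rw [conv_repr cu f (ℛ K a), ← h]
  refine Finset.sum_congr rfl fun x _ => ?_
  rw [cu_apply, ← Algebra.smul_def]

lemma conv_cu_right (f : C →ₗ[K] B) : conv f cu = f := by
  ext a
  have h := Coalgebra.sum_map_tmul_counit_eq (R := K) f a (repr := ℛ K a)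
  apply_fun (TensorProduct.rid K B) at h
  simp only [map_sum, rid_tmul, one_smul] at h
  rw [conv_repr f cu (ℛ K a), ← h]
  refine Finset.sum_congr rfl fun x _ => ?_
  rw [cu_apply, ← Algebra.commutes, ← Algebra.smul_def]

lemma conv_assoc (f g h : C →ₗ[K] B) : conv (conv f g) h = conv f (conv g h) := by
  ext a
  set r := ℛ K a
  set l : (i : r.ι) → Coalgebra.Repr K (r.left i) (C × C) := fun i => ℛ K (r.left i)
  set m : (i : r.ι) → Coalgebra.Repr K (r.right i) (C × C) := fun i => ℛ K (r.right i)
  have key := Coalgebra.sum_map_tmul_tmul_eq (R := K) f g h a (repr := r) (a₁ := l) (a₂ := m)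
  apply_fun (LinearMap.mul' K B ∘ₗ (LinearMap.mul' K B).lTensor B) at key
  simp only [map_sum, comp_apply, lTensor_tmul, mul'_apply] at key
  rw [conv_repr (conv f g) h r, conv_repr f (conv g h) r]
  calc ∑ i ∈ r.index, conv f g (r.left i) * h (r.right i)
      = ∑ i ∈ r.index, ∑ j ∈ (l i).index,
          f ((l i).left j) * (g ((l i).right j) * h (r.right i)) := by
        refine Finset.sum_congr rfl fun i _ => ?_
        rw [conv_repr f g (l i), Finset.sum_mul]
        exact Finset.sum_congr rfl fun j _ => mul_assoc _ _ _
    _ = ∑ i ∈ r.index, ∑ j ∈ (m i).index,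
          f (r.left i) * (g ((m i).left j) * h ((m i).right j)) := key.symm
    _ = ∑ i ∈ r.index, f (r.left i) * conv g h (r.right i) := by
        refine Finset.sum_congr rfl fun i _ => ?_
        rw [conv_repr g h (m i), Finset.mul_sum]

lemma conv_inv_unique {f g g' : C →ₗ[K] B} (h1 : conv g f = cu) (h2 : conv f g' = cu) :
    g = g' := by
  have : conv g (conv f g') = conv (conv g f) g' := (conv_assoc g f g').symm
  rw [h1, h2, conv_cu_right, conv_cu_left] at this
  exact this

end Conv


section Helpers

variable {A : Type*} [Semiring A] [Algebra K A]

lemma map_mul_tmul {M N : Type*} [AddCommMonoid M] [Module K M] [AddCommMonoid N] [Module K N]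
    (f : A →ₗ[K] M) (g : A →ₗ[K] N) (c₁ c₂ : A) (t : A ⊗[K] A) :
    TensorProduct.map f g (t * (c₁ ⊗ₜ[K] c₂))
      = TensorProduct.map (f ∘ₗ LinearMap.mulRight K c₁) (g ∘ₗ LinearMap.mulRight K c₂) t := by
  induction t using TensorProduct.induction_on with
  | zero => simp
  | tmul u v => simp [Algebra.TensorProduct.tmul_mul_tmul]
  | add t₁ t₂ ih1 ih2 => rw [add_mul, map_add, ih1, ih2, map_add]

lemma map_id_mul {B : Type*} [Semiring B] [Algebra K B] (g : A →ₗ[K] B)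
    (hg : ∀ x y : A, g (x * y) = g x * g y) (u v : A ⊗[K] A) :
    TensorProduct.map LinearMap.id g (u * v)
      = TensorProduct.map LinearMap.id g u * TensorProduct.map LinearMap.id g v := by
  induction u using TensorProduct.induction_on with
  | zero => simp
  | tmul x₁ y₁ =>
      induction v using TensorProduct.induction_on with
      | zero => simp
      | tmul x₂ y₂ => simp [Algebra.TensorProduct.tmul_mul_tmul, hg]
      | add v₁ v₂ ih1 ih2 => rw [mul_add, map_add, ih1, ih2, map_add, mul_add]
  | add u₁ u₂ ih1 ih2 => rw [add_mul, map_add, ih1, ih2, map_add, add_mul]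

lemma eval_on_coinv {B M N : Type*} [AddCommMonoid B] [Module K B]
    [AddCommMonoid M] [Module K M] [AddCommMonoid N] [Module K N]
    (F : A →ₗ[K] M) (base : A →ₗ[K] B) (G : B →ₗ[K] N) (t : A ⊗[K] A) (x : A) (xb : B)
    (ht : TensorProduct.map LinearMap.id base t = x ⊗ₜ[K] xb) :
    TensorProduct.map F (G ∘ₗ base) t = F x ⊗ₜ[K] G xb := by
  have h : TensorProduct.map F (G ∘ₗ base)
      = TensorProduct.map F G ∘ₗ TensorProduct.map LinearMap.id base := by
    rw [← TensorProduct.map_comp, LinearMap.comp_id]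
  rw [h, LinearMap.comp_apply, ht, TensorProduct.map_tmul]

end Helpers
section Hopf

variable {A : Type*} [Semiring A] [HopfAlgebra K A]
variable {B : Type*} [Semiring B] [HopfAlgebra K B]

/-- The antipode with explicit arguments. -/
noncomputable abbrev aS (K A : Type*) [CommSemiring K] [Semiring A] [HopfAlgebra K A] :
    A →ₗ[K] A := HopfAlgebra.antipode K

/-- Push a Sweedler representation through a coalgebra morphism. -/
noncomputable def mapRepr (f : A →ₐc[K] B) {a : A} {ι : Type*} (r : Coalgebra.Repr K a ι) :
    Coalgebra.Repr K (f a) ι where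
  index := r.index
  left := fun i => f (r.left i)
  right := fun i => f (r.right i)
  eq := by
    have h := LinearMap.congr_fun (CoalgHomClass.map_comp_comul f) a
    simp only [comp_apply, LinearMap.coe_coe] at h
    rw [← h, ← r.eq, map_sum]
    simp

lemma conv_antipode_id : conv (aS K A) LinearMap.id = (cu : A →ₗ[K] A) := by
  have : TensorProduct.map (aS K A) (LinearMap.id) = (aS K A).rTensor A := rfl
  rw [conv, this]
  exact HopfAlgebra.mul_antipode_rTensor_comul

lemma conv_id_antipode : conv LinearMap.id (aS K A) = (cu : A →ₗ[K] A) := by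
  have : TensorProduct.map (LinearMap.id) (aS K A) = (aS K A).lTensor A := rfl
  rw [conv, this]
  exact HopfAlgebra.mul_antipode_lTensor_comul

lemma conv_antipode_comp_left (f : A →ₐc[K] B) :
    conv (aS K B ∘ₗ f.toLinearMap) f.toLinearMap = cu := by
  ext a
  rw [conv_repr _ _ (ℛ K a), cu_apply]
  have h := HopfAlgebra.sum_antipode_mul_eq_algebraMap_counit (R := K) (mapRepr f (ℛ K a))
  simp only [mapRepr, CoalgHomClass.counit_comp_apply] at h
  exact h

lemma conv_antipode_comp_right (f : A →ₐc[K] B) :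
    conv f.toLinearMap (aS K B ∘ₗ f.toLinearMap) = cu := by
  ext a
  rw [conv_repr _ _ (ℛ K a), cu_apply]
  have h := HopfAlgebra.sum_mul_antipode_eq_algebraMap_counit (R := K) (mapRepr f (ℛ K a))
  simp only [mapRepr, CoalgHomClass.counit_comp_apply] at h
  exact h

/-- A bialgebra morphism between Hopf algebras commutes with the antipodes. -/
lemma antipode_comp (f : A →ₐc[K] B) :
    aS K B ∘ₗ f.toLinearMap = f.toLinearMap ∘ₗ aS K A := by
  refine conv_inv_unique (conv_antipode_comp_left f) ?_
  ext a
  rw [conv_repr _ _ (ℛ K a), cu_apply]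
  calc ∑ i ∈ (ℛ K a).index, f ((ℛ K a).left i) * (f.toLinearMap ∘ₗ aS K A) ((ℛ K a).right i)
      = f (∑ i ∈ (ℛ K a).index, (ℛ K a).left i * aS K A ((ℛ K a).right i)) := by
        rw [map_sum]; exact Finset.sum_congr rfl fun i _ => (map_mul f _ _).symm
    _ = algebraMap K B (Coalgebra.counit a) := by
        rw [HopfAlgebra.sum_mul_antipode_eq_algebraMap_counit (R := K) (ℛ K a)]
        exact AlgHomClass.commutes f _

end Hopf

section Single

variable {A : Type*} [Semiring A] [HopfAlgebra K A]

lemma hq_id : ∀ x : A, LinearMap.mul' K A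
    (TensorProduct.map LinearMap.id (aS K A ∘ₗ LinearMap.id) (Coalgebra.comul x))
    = algebraMap K A (Coalgebra.counit x) := by
  intro x
  have : TensorProduct.map (LinearMap.id : A →ₗ[K] A) (aS K A ∘ₗ LinearMap.id)
      = (aS K A).lTensor A := by rw [LinearMap.comp_id]; rfl
  rw [this]
  exact HopfAlgebra.mul_antipode_lTensor_comul_apply x

lemma collapse (q : A →ₗ[K] A)
    (hq : ∀ x : A, LinearMap.mul' K A (TensorProduct.map q (aS K A ∘ₗ q) (Coalgebra.comul x))
        = algebraMap K A (Coalgebra.counit x))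
    (x c : A) {ι : Type*} (lx : Coalgebra.Repr K x ι) :
    ∑ j ∈ lx.index, (TensorProduct.map LinearMap.id q) (Coalgebra.comul (lx.left j))
        * (c ⊗ₜ[K] aS K A (q (lx.right j)))
      = (x * c) ⊗ₜ[K] (1 : A) := by
  set Ξ : (A ⊗[K] A) ⊗[K] A →ₗ[K] A ⊗[K] A :=
    LinearMap.mul' K (A ⊗[K] A) ∘ₗ TensorProduct.map (TensorProduct.map LinearMap.id q)
      ((TensorProduct.mk K A A c) ∘ₗ (aS K A ∘ₗ q)) with hΞ
  have hXi : ∀ (P : A ⊗[K] A) (w : A),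
      Ξ (P ⊗ₜ[K] w) = (TensorProduct.map LinearMap.id q) P * (c ⊗ₜ[K] aS K A (q w)) := by
    intro P w; simp [hΞ]
  have hmix : ∀ (u : A) (P : A ⊗[K] A),
      Ξ ((TensorProduct.assoc K A A A).symm (u ⊗ₜ[K] P))
        = (u * c) ⊗ₜ[K] (LinearMap.mul' K A (TensorProduct.map q (aS K A ∘ₗ q) P)) := by
    intro u P
    induction P using TensorProduct.induction_on with
    | zero => simp
    | tmul v w =>
        simp [hΞ, Algebra.TensorProduct.tmul_mul_tmul]
    | add P₁ P₂ ih1 ih2 =>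
        simp only [tmul_add, map_add, ih1, ih2]
  calc ∑ j ∈ lx.index, (TensorProduct.map LinearMap.id q) (Coalgebra.comul (lx.left j))
        * (c ⊗ₜ[K] aS K A (q (lx.right j)))
      = Ξ ((Coalgebra.comul (R := K) (A := A)).rTensor A (Coalgebra.comul x)) := by
        rw [← lx.eq, map_sum, map_sum]
        exact Finset.sum_congr rfl fun j _ => (by rw [LinearMap.rTensor_tmul, hXi])
    _ = Ξ ((TensorProduct.assoc K A A A).symm
          ((Coalgebra.comul (R := K) (A := A)).lTensor A (Coalgebra.comul x))) := by
        rw [Coalgebra.coassoc_symm_apply]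
    _ = ∑ j ∈ lx.index, (lx.left j * c) ⊗ₜ[K] algebraMap K A (Coalgebra.counit (lx.right j)) := by
        rw [← lx.eq, map_sum, map_sum, map_sum]
        refine Finset.sum_congr rfl fun j _ => ?_
        rw [LinearMap.lTensor_tmul, hmix, hq]
    _ = (x * c) ⊗ₜ[K] (1 : A) := by
        have h := Coalgebra.sum_map_tmul_counit_eq (R := K) (LinearMap.mulRight K c) x
          (repr := lx)
        apply_fun (LinearMap.lTensor A (Algebra.linearMap K A)) at h
        simpa using h

lemma main4 (q : A →ₗ[K] A)
    (hq : ∀ x : A, LinearMap.mul' K A (TensorProduct.map q (aS K A ∘ₗ q) (Coalgebra.comul x))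
        = algebraMap K A (Coalgebra.counit x))
    {a : A} {ι ι₁ ι₂ : Type*} (r : Coalgebra.Repr K a ι)
    (l : ∀ i : r.ι, Coalgebra.Repr K (r.left i) ι₁)
    (m : ∀ i : r.ι, Coalgebra.Repr K (r.right i) ι₂) :
    ∑ i ∈ r.index, ∑ k ∈ (m i).index,
      (TensorProduct.map LinearMap.id q) (Coalgebra.comul (r.left i))
        * (aS K A (q ((m i).right k)) ⊗ₜ[K] aS K A (q ((m i).left k)))
    = (∑ i ∈ r.index, r.left i * aS K A (q (r.right i))) ⊗ₜ[K] (1 : A) := by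
  set W : A ⊗[K] (A ⊗[K] A) →ₗ[K] A ⊗[K] A :=
    LinearMap.mul' K (A ⊗[K] A) ∘ₗ TensorProduct.map
      ((TensorProduct.map LinearMap.id q) ∘ₗ Coalgebra.comul)
      ((TensorProduct.comm K A A).toLinearMap ∘ₗ
        TensorProduct.map (aS K A ∘ₗ q) (aS K A ∘ₗ q)) with hW
  have hWp : ∀ w x y : A, W (w ⊗ₜ[K] (x ⊗ₜ[K] y))
      = (TensorProduct.map LinearMap.id q) (Coalgebra.comul w)
        * (aS K A (q y) ⊗ₜ[K] aS K A (q x)) := by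
    intro w x y; simp [hW]
  have key := Coalgebra.sum_tmul_tmul_eq (R := K) r l m
  apply_fun W at key
  simp only [map_sum] at key
  calc ∑ i ∈ r.index, ∑ k ∈ (m i).index,
      (TensorProduct.map LinearMap.id q) (Coalgebra.comul (r.left i))
        * (aS K A (q ((m i).right k)) ⊗ₜ[K] aS K A (q ((m i).left k)))
      = ∑ i ∈ r.index, ∑ k ∈ (m i).index,
          W (r.left i ⊗ₜ[K] ((m i).left k ⊗ₜ[K] (m i).right k)) := by
        exact Finset.sum_congr rfl fun i _ => Finset.sum_congr rfl fun k _ => (hWp _ _ _).symm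
    _ = ∑ i ∈ r.index, ∑ j ∈ (l i).index,
          W ((l i).left j ⊗ₜ[K] ((l i).right j ⊗ₜ[K] r.right i)) := key.symm
    _ = ∑ i ∈ r.index, (r.left i * aS K A (q (r.right i))) ⊗ₜ[K] (1 : A) := by
        refine Finset.sum_congr rfl fun i _ => ?_
        calc ∑ j ∈ (l i).index, W ((l i).left j ⊗ₜ[K] ((l i).right j ⊗ₜ[K] r.right i))
            = ∑ j ∈ (l i).index, (TensorProduct.map LinearMap.id q)
                (Coalgebra.comul ((l i).left j))
                * (aS K A (q (r.right i)) ⊗ₜ[K] aS K A (q ((l i).right j))) := by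
              exact Finset.sum_congr rfl fun j _ => hWp _ _ _
          _ = (r.left i * aS K A (q (r.right i))) ⊗ₜ[K] (1 : A) :=
              collapse q hq (r.left i) (aS K A (q (r.right i))) (l i)
    _ = (∑ i ∈ r.index, r.left i * aS K A (q (r.right i))) ⊗ₜ[K] (1 : A) :=
        (TensorProduct.sum_tmul _ _ _).symm

/-- The antipode is an anti-coalgebra morphism. -/
lemma comul_antipode :
    (Coalgebra.comul : A →ₗ[K] A ⊗[K] A) ∘ₗ aS K A
      = (TensorProduct.comm K A A).toLinearMap ∘ₗ
          TensorProduct.map (aS K A) (aS K A) ∘ₗ Coalgebra.comul := by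
  refine conv_inv_unique (f := (Coalgebra.comul : A →ₗ[K] A ⊗[K] A)) ?_ ?_
  · ext a
    rw [conv_repr _ _ (ℛ K a), cu_apply]
    calc ∑ i ∈ (ℛ K a).index,
          ((Coalgebra.comul : A →ₗ[K] A ⊗[K] A) ∘ₗ aS K A) ((ℛ K a).left i)
            * Coalgebra.comul ((ℛ K a).right i)
        = Coalgebra.comul (R := K)
            (∑ i ∈ (ℛ K a).index, aS K A ((ℛ K a).left i) * (ℛ K a).right i) := by
          rw [map_sum]
          exact Finset.sum_congr rfl fun i _ => (Bialgebra.comul_mul _ _).symm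
      _ = algebraMap K (A ⊗[K] A) (Coalgebra.counit a) := by
          rw [HopfAlgebra.sum_antipode_mul_eq_algebraMap_counit (R := K) (ℛ K a),
            Bialgebra.comul_algebraMap]
  · ext a
    rw [conv_repr _ _ (ℛ K a), cu_apply]
    set r := ℛ K a
    set l : (i : r.ι) → Coalgebra.Repr K (r.left i) (A × A) := fun i => ℛ K (r.left i) with hl
    set m : (i : r.ι) → Coalgebra.Repr K (r.right i) (A × A) := fun i => ℛ K (r.right i) with hm
    have expand : ∀ i : r.ι,
        ((TensorProduct.comm K A A).toLinearMap ∘ₗ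
          TensorProduct.map (aS K A) (aS K A) ∘ₗ Coalgebra.comul) (r.right i)
        = ∑ k ∈ (m i).index,
            aS K A ((m i).right k) ⊗ₜ[K] aS K A ((m i).left k) := by
      intro i
      rw [LinearMap.comp_apply, LinearMap.comp_apply, ← (m i).eq, map_sum, map_sum]
      simp
    calc ∑ i ∈ r.index, Coalgebra.comul (r.left i)
          * ((TensorProduct.comm K A A).toLinearMap ∘ₗ
              TensorProduct.map (aS K A) (aS K A) ∘ₗ Coalgebra.comul) (r.right i)
        = ∑ i ∈ r.index, ∑ k ∈ (m i).index,
            (TensorProduct.map LinearMap.id LinearMap.id) (Coalgebra.comul (r.left i))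
              * (aS K A (LinearMap.id ((m i).right k))
                  ⊗ₜ[K] aS K A (LinearMap.id ((m i).left k))) := by
          refine Finset.sum_congr rfl fun i _ => ?_
          rw [expand i, Finset.mul_sum]
          simp [TensorProduct.map_id]
      _ = (∑ i ∈ r.index, r.left i * aS K A (LinearMap.id (r.right i))) ⊗ₜ[K] (1 : A) :=
          main4 LinearMap.id hq_id r l m
      _ = algebraMap K (A ⊗[K] A) (Coalgebra.counit a) := by
          simp only [LinearMap.id_coe, id_eq]
          rw [HopfAlgebra.sum_mul_antipode_eq_algebraMap_counit (R := K) r,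
            Algebra.TensorProduct.algebraMap_apply]

end Single




end RadfordAux

/-- **Radford's theorem on Hopf algebras with a projection.**
Let `(H, A)` be a Radford pair: `i : H → A` and `p : A → H` are Hopf algebra
morphisms (bialgebra morphisms of Hopf algebras) with `p ∘ i = id_H`.  Let
`R = A^{co H} = {a : (id ⊗ p) Δ a = a ⊗ 1}` be the subspace of right
coinvariants.  Then `R` is a subalgebra of `A`, and the multiplication map
`R ⊗ H → A`, `r ⊗ h ↦ r · i(h)`, is bijective and right `H`-linear, giving
the Hopf module isomorphism `A ≅ R # H`. -/
theorem radford_pair_coinvariants_bosonization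
    (K H A : Type) [Field K]
    [Ring H] [HopfAlgebra K H]
    [Ring A] [HopfAlgebra K A]
    (i : H →ₐc[K] A) (p : A →ₐc[K] H)
    (hpi : ∀ h : H, p (i h) = h)
    (R : Submodule K A)
    (hR : R = {a : A |
      (TensorProduct.map LinearMap.id p.toLinearMap) (Coalgebra.comul a)
        = a ⊗ₜ[K] (1 : H)}) :
    -- `R` is a subalgebra of `A`
    ((1 : A) ∈ R ∧ ∀ x ∈ R, ∀ y ∈ R, x * y ∈ R) ∧
    -- the map `r ⊗ h ↦ r · i(h)` is a linear isomorphism `R ⊗ H ≅ A`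
    Function.Bijective
      (LinearMap.mul' K A ∘ₗ
        TensorProduct.map R.subtype i.toLinearMap :
          R ⊗[K] H →ₗ[K] A) ∧
    -- and it intertwines the right `H`-module structures
    (∀ (r : R) (h h' : H),
      (LinearMap.mul' K A ∘ₗ TensorProduct.map R.subtype i.toLinearMap)
          (r ⊗ₜ[K] (h * h'))
        = (LinearMap.mul' K A ∘ₗ TensorProduct.map R.subtype i.toLinearMap)
            (r ⊗ₜ[K] h) * i h') := by
  classical
  have hmem : ∀ a : A, a ∈ R ↔
      (TensorProduct.map LinearMap.id p.toLinearMap) (Coalgebra.comul a)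
        = a ⊗ₜ[K] (1 : H) := by
    intro a
    have : a ∈ R ↔ a ∈ (R : Set A) := Iff.rfl
    rw [this, hR]
    exact Set.mem_setOf_eq ▸ Iff.rfl
  -- the idempotent bialgebra endomorphism j = i ∘ p
  set j : A →ₐc[K] A := i.comp p with hjdef
  have hj : ∀ a : A, j a = i (p a) := fun _ => rfl
  have hji : ∀ h : H, j (i h) = i h := fun h => by rw [hj, hpi]
  have hjj : ∀ a : A, j (j a) = j a := fun a => by rw [hj a, hji]
  have hjlin : (j.toLinearMap : A →ₗ[K] A) = i.toLinearMap ∘ₗ p.toLinearMap :=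
    LinearMap.ext fun a => rfl
  have hpj : p.toLinearMap ∘ₗ j.toLinearMap = p.toLinearMap :=
    LinearMap.ext fun a => show p (j a) = p a by rw [hj, hpi]
  -- Part 1 : R is a subalgebra
  have h1R : (1 : A) ∈ R := by
    rw [hmem, Bialgebra.comul_one, Algebra.TensorProduct.one_def, TensorProduct.map_tmul]
    rw [show p.toLinearMap (1 : A) = (1 : H) from map_one p]
    rfl
  have hmulR : ∀ x ∈ R, ∀ y ∈ R, x * y ∈ R := by
    intro x hx y hy
    rw [hmem] at hx hy ⊢
    rw [Bialgebra.comul_mul,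
      RadfordAux.map_id_mul p.toLinearMap
        (fun a b => show p (a * b) = p a * p b from map_mul p a b),
      hx, hy, Algebra.TensorProduct.tmul_mul_tmul, mul_one]
  refine ⟨⟨h1R, hmulR⟩, ?_, ?_⟩
  · -- bijectivity
    set Sl : A →ₗ[K] A := RadfordAux.aS K A with hSl
    set π : A →ₗ[K] A := RadfordAux.conv LinearMap.id (Sl ∘ₗ j.toLinearMap) with hπ
    have hπval : ∀ (a : A) (r : Coalgebra.Repr K a (A × A)),
        π a = ∑ idx ∈ r.index, r.left idx * Sl (j.toLinearMap (r.right idx)) := by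
      intro a r
      rw [hπ, RadfordAux.conv_repr _ _ r]
      simp only [LinearMap.id_coe, id_eq, LinearMap.comp_apply]
    have hconvL : RadfordAux.conv (Sl ∘ₗ j.toLinearMap) j.toLinearMap = RadfordAux.cu :=
      RadfordAux.conv_antipode_comp_left j
    have hπj : RadfordAux.conv π j.toLinearMap = LinearMap.id := by
      rw [hπ, RadfordAux.conv_assoc, hconvL, RadfordAux.conv_cu_right]
    have hq_j : ∀ x : A, LinearMap.mul' K A
        (TensorProduct.map j.toLinearMap (Sl ∘ₗ j.toLinearMap) (Coalgebra.comul x))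
        = algebraMap K A (Coalgebra.counit x) := by
      intro x
      have h := LinearMap.congr_fun (RadfordAux.conv_antipode_comp_right j) x
      simpa [RadfordAux.conv, RadfordAux.cu] using h
    have hjS : ∀ x : A, Sl (j.toLinearMap x) = j.toLinearMap (Sl x) :=
      fun x => LinearMap.congr_fun (RadfordAux.antipode_comp j) x
    have hjSj : ∀ x : A, j.toLinearMap (Sl (j.toLinearMap x)) = Sl (j.toLinearMap x) := by
      intro x
      rw [← hjS, show j.toLinearMap (j.toLinearMap x) = j.toLinearMap x from hjj x]
    have hjmul : ∀ x y : A, j.toLinearMap (x * y) = j.toLinearMap x * j.toLinearMap y :=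
      fun x y => map_mul j x y
    -- membership of π a in R
    have hπR : ∀ a : A, π a ∈ R := by
      intro a
      rw [hmem]
      set r := ℛ K a with hr
      set l : (idx : r.ι) → Coalgebra.Repr K (r.left idx) (A × A) := fun idx => ℛ K (r.left idx)
        with hldef
      set m : (idx : r.ι) → Coalgebra.Repr K (r.right idx) (A × A) := fun idx => ℛ K (r.right idx)
        with hmdef
      -- j-version
      have hA : TensorProduct.map LinearMap.id j.toLinearMap (Coalgebra.comul (π a))
          = π a ⊗ₜ[K] (1 : A) := by
        have hSterm : ∀ idx : r.ι,
            TensorProduct.map LinearMap.id j.toLinearMap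
              (Coalgebra.comul (R := K) (Sl (j.toLinearMap (r.right idx))))
            = ∑ k ∈ (m idx).index,
                Sl (j.toLinearMap ((m idx).right k)) ⊗ₜ[K] Sl (j.toLinearMap ((m idx).left k)) := by
          intro idx
          have h1 := LinearMap.congr_fun (RadfordAux.comul_antipode (K := K) (A := A))
            (j.toLinearMap (r.right idx))
          simp only [LinearMap.comp_apply] at h1
          rw [h1, show Coalgebra.comul (R := K) (j.toLinearMap (r.right idx))
            = Coalgebra.comul (R := K) (j (r.right idx)) from rfl,
            ← (RadfordAux.mapRepr j (m idx)).eq]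
          simp only [RadfordAux.mapRepr, map_sum]
          refine Finset.sum_congr rfl fun k _ => ?_
          simp only [TensorProduct.map_tmul, LinearEquiv.coe_coe, TensorProduct.comm_tmul]
          congr 1
          exact hjSj _
        calc TensorProduct.map LinearMap.id j.toLinearMap (Coalgebra.comul (π a))
            = ∑ idx ∈ r.index,
                TensorProduct.map LinearMap.id j.toLinearMap (Coalgebra.comul (r.left idx))
                * TensorProduct.map LinearMap.id j.toLinearMap
                    (Coalgebra.comul (Sl (j.toLinearMap (r.right idx)))) := by
              rw [hπval a r, map_sum, map_sum]
              exact Finset.sum_congr rfl fun idx _ => by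
                rw [Bialgebra.comul_mul, RadfordAux.map_id_mul j.toLinearMap hjmul]
          _ = ∑ idx ∈ r.index, ∑ k ∈ (m idx).index,
                TensorProduct.map LinearMap.id j.toLinearMap (Coalgebra.comul (r.left idx))
                * (RadfordAux.aS K A (j.toLinearMap ((m idx).right k))
                    ⊗ₜ[K] RadfordAux.aS K A (j.toLinearMap ((m idx).left k))) := by
              refine Finset.sum_congr rfl fun idx _ => ?_
              rw [hSterm idx, Finset.mul_sum]
          _ = (∑ idx ∈ r.index, r.left idx * RadfordAux.aS K A (j.toLinearMap (r.right idx)))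
                ⊗ₜ[K] (1 : A) :=
              RadfordAux.main4 j.toLinearMap hq_j r l m
          _ = π a ⊗ₜ[K] (1 : A) := by rw [hπval a r]
      -- push to the p-version
      have hfact : TensorProduct.map (LinearMap.id : A →ₗ[K] A) p.toLinearMap
          = TensorProduct.map (LinearMap.id : A →ₗ[K] A) p.toLinearMap ∘ₗ
            TensorProduct.map (LinearMap.id : A →ₗ[K] A) j.toLinearMap := by
        rw [← TensorProduct.map_comp, hpj, LinearMap.id_comp]
      rw [hfact, LinearMap.comp_apply, hA, TensorProduct.map_tmul]
      rw [show p.toLinearMap (1 : A) = (1 : H) from map_one p]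
      rfl
    -- key evaluation of π on R · i(H)
    have hK1 : ∀ x : A, x ∈ R → ∀ h' : H,
        π (x * i h') = Coalgebra.counit (R := K) h' • x := by
      intro x hx h'
      have hxp : TensorProduct.map LinearMap.id p.toLinearMap (Coalgebra.comul x)
          = x ⊗ₜ[K] (1 : H) := (hmem x).1 hx
      have hxj : TensorProduct.map LinearMap.id j.toLinearMap (Coalgebra.comul x)
          = x ⊗ₜ[K] (1 : A) := by
        have hcomp : TensorProduct.map (LinearMap.id : A →ₗ[K] A) j.toLinearMap
            = TensorProduct.map (LinearMap.id : A →ₗ[K] A) i.toLinearMap ∘ₗ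
              TensorProduct.map (LinearMap.id : A →ₗ[K] A) p.toLinearMap := by
          rw [← TensorProduct.map_comp, ← hjlin, LinearMap.id_comp]
        rw [hcomp, LinearMap.comp_apply, hxp, TensorProduct.map_tmul]
        rw [show i.toLinearMap (1 : H) = (1 : A) from map_one i]
        rfl
      set rh := ℛ K h' with hrh
      have hcm : Coalgebra.comul (R := K) (x * i h')
          = ∑ s ∈ rh.index,
              Coalgebra.comul (R := K) x * (i (rh.left s) ⊗ₜ[K] i (rh.right s)) := by
        rw [Bialgebra.comul_mul, ← (RadfordAux.mapRepr i rh).eq, Finset.mul_sum]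
        rfl
      have hterm : ∀ s : rh.ι,
          LinearMap.mul' K A (TensorProduct.map LinearMap.id (Sl ∘ₗ j.toLinearMap)
            (Coalgebra.comul (R := K) x * (i (rh.left s) ⊗ₜ[K] i (rh.right s))))
          = x * (i (rh.left s) * Sl (i (rh.right s))) := by
        intro s
        rw [RadfordAux.map_mul_tmul]
        have hswap : (Sl ∘ₗ j.toLinearMap) ∘ₗ LinearMap.mulRight K (i (rh.right s))
            = (Sl ∘ₗ LinearMap.mulRight K (i (rh.right s))) ∘ₗ j.toLinearMap := by
          ext v
          show Sl (j.toLinearMap (v * i (rh.right s)))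
            = Sl (j.toLinearMap v * i (rh.right s))
          rw [hjmul, show j.toLinearMap (i (rh.right s)) = i (rh.right s) from hji _]
        rw [hswap, RadfordAux.eval_on_coinv (LinearMap.id ∘ₗ LinearMap.mulRight K (i (rh.left s)))
          j.toLinearMap (Sl ∘ₗ LinearMap.mulRight K (i (rh.right s)))
          (Coalgebra.comul x) x 1 hxj]
        simp only [LinearMap.comp_apply, LinearMap.id_coe, id_eq, LinearMap.mulRight_apply,
          LinearMap.mul'_apply, one_mul, mul_assoc]
      calc π (x * i h')
          = ∑ s ∈ rh.index, x * (i (rh.left s) * Sl (i (rh.right s))) := by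
            rw [hπ, RadfordAux.conv, LinearMap.comp_apply, LinearMap.comp_apply, hcm,
              map_sum, map_sum]
            exact Finset.sum_congr rfl fun s _ => hterm s
        _ = x * algebraMap K A (Coalgebra.counit (R := K) (i h')) := by
            rw [← Finset.mul_sum]
            congr 1
            have h := HopfAlgebra.sum_mul_antipode_eq_algebraMap_counit (R := K) (RadfordAux.mapRepr i rh)
            simpa [RadfordAux.mapRepr] using h
        _ = Coalgebra.counit (R := K) h' • x := by
            rw [CoalgHomClass.counit_comp_apply (R := K) i h', ← Algebra.commutes,
              ← Algebra.smul_def]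
    -- the inverse map
    set πR : A →ₗ[K] R := LinearMap.codRestrict R π hπR with hπRdef
    set ψ : A →ₗ[K] (R ⊗[K] H) :=
      TensorProduct.map πR p.toLinearMap ∘ₗ Coalgebra.comul with hψ
    have hsub : R.subtype ∘ₗ πR = π := LinearMap.subtype_comp_codRestrict π R hπR
    have hΦψ : (LinearMap.mul' K A ∘ₗ TensorProduct.map R.subtype i.toLinearMap) ∘ₗ ψ
        = LinearMap.id := by
      have h2 : (LinearMap.mul' K A ∘ₗ TensorProduct.map R.subtype i.toLinearMap) ∘ₗ ψ
          = RadfordAux.conv π j.toLinearMap := by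
        have h3 : TensorProduct.map R.subtype i.toLinearMap ∘ₗ TensorProduct.map πR p.toLinearMap
            = TensorProduct.map π j.toLinearMap := by
          rw [← TensorProduct.map_comp, hsub, ← hjlin]
        refine LinearMap.ext fun a => ?_
        simp only [hψ, RadfordAux.conv, LinearMap.comp_apply]
        rw [← LinearMap.comp_apply (TensorProduct.map R.subtype i.toLinearMap), h3]
      rw [h2, hπj]
    have hright : ∀ (rr : R) (h : H),
        ψ ((LinearMap.mul' K A ∘ₗ TensorProduct.map R.subtype i.toLinearMap) (rr ⊗ₜ[K] h))
          = rr ⊗ₜ[K] h := by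
      intro rr h
      have happ : (LinearMap.mul' K A ∘ₗ TensorProduct.map R.subtype i.toLinearMap)
          (rr ⊗ₜ[K] h) = (rr : A) * i h := rfl
      rw [happ]
      have hrr : TensorProduct.map LinearMap.id p.toLinearMap (Coalgebra.comul (rr : A))
          = (rr : A) ⊗ₜ[K] (1 : H) := (hmem (rr : A)).1 rr.2
      set rh := ℛ K h with hrh
      have hcm : Coalgebra.comul (R := K) ((rr : A) * i h)
          = ∑ s ∈ rh.index,
              Coalgebra.comul (R := K) (rr : A) * (i (rh.left s) ⊗ₜ[K] i (rh.right s)) := by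
        rw [Bialgebra.comul_mul, ← (RadfordAux.mapRepr i rh).eq, Finset.mul_sum]
        rfl
      have hterm : ∀ s : rh.ι,
          TensorProduct.map πR p.toLinearMap
            (Coalgebra.comul (R := K) (rr : A) * (i (rh.left s) ⊗ₜ[K] i (rh.right s)))
          = πR ((rr : A) * i (rh.left s)) ⊗ₜ[K] rh.right s := by
        intro s
        rw [RadfordAux.map_mul_tmul]
        have hswap : p.toLinearMap ∘ₗ LinearMap.mulRight K (i (rh.right s))
            = LinearMap.mulRight K (rh.right s) ∘ₗ p.toLinearMap := by
          ext v
          show p (v * i (rh.right s)) = p v * rh.right s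
          rw [map_mul p, hpi]
        rw [hswap, RadfordAux.eval_on_coinv (πR ∘ₗ LinearMap.mulRight K (i (rh.left s)))
          p.toLinearMap (LinearMap.mulRight K (rh.right s))
          (Coalgebra.comul (rr : A)) (rr : A) 1 hrr]
        simp only [LinearMap.comp_apply, LinearMap.mulRight_apply, one_mul]
      have hπRval : ∀ s : rh.ι, πR ((rr : A) * i (rh.left s))
          = Coalgebra.counit (R := K) (rh.left s) • rr := by
        intro s
        apply Subtype.ext
        rw [Submodule.coe_smul]
        rw [show (πR ((rr : A) * i (rh.left s)) : A) = π ((rr : A) * i (rh.left s)) from rfl]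
        exact hK1 (rr : A) rr.2 (rh.left s)
      calc ψ ((rr : A) * i h)
          = ∑ s ∈ rh.index, πR ((rr : A) * i (rh.left s)) ⊗ₜ[K] rh.right s := by
            rw [hψ, LinearMap.comp_apply, hcm, map_sum]
            exact Finset.sum_congr rfl fun s _ => hterm s
        _ = rr ⊗ₜ[K] ∑ s ∈ rh.index, Coalgebra.counit (R := K) (rh.left s) • rh.right s := by
            rw [TensorProduct.tmul_sum]
            exact Finset.sum_congr rfl fun s _ => by
              rw [hπRval s, TensorProduct.smul_tmul]
        _ = rr ⊗ₜ[K] h := by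
            congr 1
            have hsum := Coalgebra.sum_counit_tmul_eq (R := K) rh
            apply_fun (TensorProduct.lid K H) at hsum
            simp only [map_sum, TensorProduct.lid_tmul, one_smul] at hsum
            exact hsum
    constructor
    · intro t t' htt
      have h1 : ψ ∘ₗ (LinearMap.mul' K A ∘ₗ TensorProduct.map R.subtype i.toLinearMap)
          = LinearMap.id := TensorProduct.ext' fun rr h => hright rr h
      have e : ∀ u : R ⊗[K] H,
          ψ ((LinearMap.mul' K A ∘ₗ TensorProduct.map R.subtype i.toLinearMap) u) = u := by
        intro u
        have h2 := LinearMap.congr_fun h1 u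
        simpa only [LinearMap.comp_apply, LinearMap.id_coe, id_eq] using h2
      rw [← e t, ← e t', htt]
    · intro a
      exact ⟨ψ a, LinearMap.congr_fun hΦψ a⟩
  · -- right H-linearity
    intro r h h'
    simp only [LinearMap.comp_apply, TensorProduct.map_tmul, LinearMap.mul'_apply,
      Submodule.subtype_apply]
    rw [show i.toLinearMap (h * h') = i.toLinearMap h * i h' from map_mul i h h', mul_assoc]
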